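/- Let R be any ring with 1 and n ≥ 1. If a matrix A ∈ Mₙ(R) admits two (not necessarily strict) Bruhat decompositions A = T₁·U₁·P_{π₁}·V₁ = T₂·U₂·P_{π₂}·V₂, where each Tᵢ is unipotent lower triangular, each Uᵢ is an invertible diagonal matrix, each P_{πᵢ} is a permutation matrix, and each Vᵢ is unipotent upper triangular, then π₁ = π₂ and U₁ = U₂. -/

import Mathlib

/-- A matrix is unipotent lower triangular if all entries above the diagonal vanish and
all diagonal entries equal `1`. -/
def UnipotentLower {R : Type*} [Zero R] [One R] {n : ℕ}
    (T : Matrix (Fin n) (Fin n) R) : Prop :=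
  (∀ i j : Fin n, i < j → T i j = 0) ∧ ∀ i, T i i = 1

/-- A matrix is unipotent upper triangular if all entries below the diagonal vanish and
all diagonal entries equal `1`. -/
def UnipotentUpper {R : Type*} [Zero R] [One R] {n : ℕ}
    (V : Matrix (Fin n) (Fin n) R) : Prop :=
  (∀ i j : Fin n, j < i → V i j = 0) ∧ ∀ i, V i i = 1

section Aux
variable {R : Type*} [Ring R] {n : ℕ}

/-- powers of a strictly lower triangular matrix vanish far from the diagonal -/
lemma strictLower_pow (N : Matrix (Fin n) (Fin n) R)
    (hN : ∀ i j : Fin n, i ≤ j → N i j = 0) :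
    ∀ (k : ℕ) (i j : Fin n), (i : ℕ) < (j : ℕ) + k → (N ^ k) i j = 0 := by
  intro k
  induction k with
  | zero =>
    intro i j h
    simp only [Nat.add_zero] at h
    simp [pow_zero, Matrix.one_apply_ne (Fin.ne_of_lt (Fin.lt_def.mpr h))]
  | succ k IH =>
    intro i j h
    rw [pow_succ, Matrix.mul_apply]
    apply Finset.sum_eq_zero
    intro l _
    by_cases hl : (i : ℕ) < (l : ℕ) + k
    · rw [IH i l hl, zero_mul]
    · have : (l : ℕ) ≤ (j : ℕ) := by omega
      rw [hN l j (Fin.le_def.mpr this), mul_zero]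

lemma strictUpper_pow (N : Matrix (Fin n) (Fin n) R)
    (hN : ∀ i j : Fin n, j ≤ i → N i j = 0) :
    ∀ (k : ℕ) (i j : Fin n), (j : ℕ) < (i : ℕ) + k → (N ^ k) i j = 0 := by
  intro k
  induction k with
  | zero =>
    intro i j h
    simp only [Nat.add_zero] at h
    simp [pow_zero, Matrix.one_apply_ne (Fin.ne_of_gt (Fin.lt_def.mpr h))]
  | succ k IH =>
    intro i j h
    rw [pow_succ, Matrix.mul_apply]
    apply Finset.sum_eq_zero
    intro l _
    by_cases hl : (l : ℕ) < (i : ℕ) + k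
    · rw [IH i l hl, zero_mul]
    · have : (j : ℕ) ≤ (l : ℕ) := by omega
      rw [hN l j (Fin.le_def.mpr this), mul_zero]

/-- a unipotent lower triangular matrix has a unipotent lower triangular two-sided inverse -/
lemma unipLower_inv (T : Matrix (Fin n) (Fin n) R) (hT : UnipotentLower T) :
    ∃ T', UnipotentLower T' ∧ T' * T = 1 ∧ T * T' = 1 := by
  set x : Matrix (Fin n) (Fin n) R := 1 - T with hx
  have hxs : ∀ i j : Fin n, i ≤ j → x i j = 0 := by
    intro i j hij
    rcases eq_or_lt_of_le hij with h | h
    · subst h; simp [hx, Matrix.sub_apply, hT.2]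
    · simp [hx, Matrix.sub_apply, hT.1 i j h, Matrix.one_apply_ne (Fin.ne_of_lt h)]
  have hxn : x ^ n = 0 := by
    ext i j
    exact strictLower_pow x hxs n i j (by omega)
  have h2 : x - 1 = -T := by rw [hx]; abel
  refine ⟨∑ k ∈ Finset.range n, x ^ k, ⟨?_, ?_⟩, ?_, ?_⟩
  · intro i j hij
    rw [Matrix.sum_apply]
    apply Finset.sum_eq_zero
    intro k _
    exact strictLower_pow x hxs k i j (by have := Fin.lt_def.mp hij; omega)
  · intro i
    rw [Matrix.sum_apply]
    rw [Finset.sum_eq_single 0]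
    · simp
    · intro k _ hk
      exact strictLower_pow x hxs k i i (by omega)
    · intro h
      exact absurd (Finset.mem_range.mpr i.pos) h
  · have h3 := geom_sum_mul x n
    rw [hxn, h2, mul_neg, zero_sub] at h3
    exact neg_injective h3
  · have h3 := mul_geom_sum x n
    rw [hxn, h2, neg_mul, zero_sub] at h3
    exact neg_injective h3

lemma unipUpper_inv (V : Matrix (Fin n) (Fin n) R) (hV : UnipotentUpper V) :
    ∃ V', UnipotentUpper V' ∧ V' * V = 1 ∧ V * V' = 1 := by
  set x : Matrix (Fin n) (Fin n) R := 1 - V with hx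
  have hxs : ∀ i j : Fin n, j ≤ i → x i j = 0 := by
    intro i j hij
    rcases eq_or_lt_of_le hij with h | h
    · subst h; simp [hx, Matrix.sub_apply, hV.2]
    · simp [hx, Matrix.sub_apply, hV.1 i j h, Matrix.one_apply_ne (Fin.ne_of_gt h)]
  have hxn : x ^ n = 0 := by
    ext i j
    exact strictUpper_pow x hxs n i j (by omega)
  have h2 : x - 1 = -V := by rw [hx]; abel
  refine ⟨∑ k ∈ Finset.range n, x ^ k, ⟨?_, ?_⟩, ?_, ?_⟩
  · intro i j hij
    rw [Matrix.sum_apply]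
    apply Finset.sum_eq_zero
    intro k _
    exact strictUpper_pow x hxs k i j (by have := Fin.lt_def.mp hij; omega)
  · intro i
    rw [Matrix.sum_apply]
    rw [Finset.sum_eq_single 0]
    · simp
    · intro k _ hk
      exact strictUpper_pow x hxs k i i (by omega)
    · intro h
      exact absurd (Finset.mem_range.mpr i.pos) h
  · have h3 := geom_sum_mul x n
    rw [hxn, h2, mul_neg, zero_sub] at h3
    exact neg_injective h3
  · have h3 := mul_geom_sum x n
    rw [hxn, h2, neg_mul, zero_sub] at h3
    exact neg_injective h3

/-- product of lower triangular matrices is lower triangular -/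
lemma lower_mul_lower {A B : Matrix (Fin n) (Fin n) R}
    (hA : ∀ i j : Fin n, i < j → A i j = 0) (hB : ∀ i j : Fin n, i < j → B i j = 0) :
    ∀ i j : Fin n, i < j → (A * B) i j = 0 := by
  intro i j hij
  rw [Matrix.mul_apply]
  apply Finset.sum_eq_zero
  intro k _
  rcases lt_or_ge i k with h | h
  · rw [hA i k h, zero_mul]
  · rw [hB k j (lt_of_le_of_lt h hij), mul_zero]

lemma upper_mul_upper {A B : Matrix (Fin n) (Fin n) R}
    (hA : ∀ i j : Fin n, j < i → A i j = 0) (hB : ∀ i j : Fin n, j < i → B i j = 0) :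
    ∀ i j : Fin n, j < i → (A * B) i j = 0 := by
  intro i j hij
  rw [Matrix.mul_apply]
  apply Finset.sum_eq_zero
  intro k _
  rcases lt_or_ge k i with h | h
  · rw [hA i k h, zero_mul]
  · rw [hB k j (lt_of_lt_of_le hij h), mul_zero]

/-- diagonal entry of a product of lower triangular matrices -/
lemma lower_mul_diag {A B : Matrix (Fin n) (Fin n) R}
    (hA : ∀ i j : Fin n, i < j → A i j = 0) (hB : ∀ i j : Fin n, i < j → B i j = 0)
    (i : Fin n) : (A * B) i i = A i i * B i i := by
  rw [Matrix.mul_apply]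
  apply Finset.sum_eq_single
  · intro k _ hk
    rcases lt_or_ge i k with h | h
    · rw [hA i k h, zero_mul]
    · rw [hB k i (lt_of_le_of_ne h hk), mul_zero]
  · intro h; exact absurd (Finset.mem_univ i) h

lemma upper_mul_diag {A B : Matrix (Fin n) (Fin n) R}
    (hA : ∀ i j : Fin n, j < i → A i j = 0) (hB : ∀ i j : Fin n, j < i → B i j = 0)
    (i : Fin n) : (A * B) i i = A i i * B i i := by
  rw [Matrix.mul_apply]
  apply Finset.sum_eq_single
  · intro k _ hk
    rcases lt_or_ge k i with h | h
    · rw [hA i k h, zero_mul]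
    · rw [hB k i (lt_of_le_of_ne h (Ne.symm hk)), mul_zero]
  · intro h; exact absurd (Finset.mem_univ i) h

lemma diag_mul_apply {A B : Matrix (Fin n) (Fin n) R} (hA : A.IsDiag) (i j : Fin n) :
    (A * B) i j = A i i * B i j := by
  rw [Matrix.mul_apply]
  apply Finset.sum_eq_single
  · intro k _ hk
    rw [hA (Ne.symm hk), zero_mul]
  · intro h; exact absurd (Finset.mem_univ i) h

lemma mul_diag_apply {A B : Matrix (Fin n) (Fin n) R} (hB : B.IsDiag) (i j : Fin n) :
    (A * B) i j = A i j * B j j := by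
  rw [Matrix.mul_apply]
  apply Finset.sum_eq_single
  · intro k _ hk
    rw [hB hk, mul_zero]
  · intro h; exact absurd (Finset.mem_univ j) h

/-- a permutation of `Fin n` satisfying `σ i ≤ i` for all `i` is the identity -/
lemma perm_eq_one_of_le {n : ℕ} (σ : Equiv.Perm (Fin n)) (h : ∀ i, σ i ≤ i) : σ = 1 := by
  have key : ∀ (k : ℕ) (i : Fin n), (i : ℕ) = k → σ i = i := by
    intro k
    induction k using Nat.strong_induction_on with
    | _ k IH =>
      intro i hi
      rcases lt_or_eq_of_le (h i) with hlt | he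
      · have hv : ((σ i : Fin n) : ℕ) < k := by
          have := Fin.lt_def.mp hlt; omega
        have := IH ((σ i : Fin n) : ℕ) hv (σ i) rfl
        exact absurd (σ.injective this) (Fin.ne_of_lt hlt)
      · exact he
  ext i
  exact Fin.val_eq_of_eq (key (i : ℕ) i rfl)

end Aux

/-- over any ring `R` with `1` (so `1 ≠ 0`) and `n ≥ 1`, if a matrix
`A` admits two (not necessarily strict) Bruhat decompositions
`A = T₁ * U₁ * P_{π₁} * V₁ = T₂ * U₂ * P_{π₂} * V₂`, then `π₁ = π₂` and `U₁ = U₂`. -/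
theorem bruhat_perm_diag_unique {R : Type*} [Ring R] [Nontrivial R] {n : ℕ} (hn : 1 ≤ n)
    (T₁ T₂ U₁ U₂ V₁ V₂ : Matrix (Fin n) (Fin n) R) (π₁ π₂ : Equiv.Perm (Fin n))
    (hT₁ : UnipotentLower T₁) (hT₂ : UnipotentLower T₂)
    (hU₁ : U₁.IsDiag) (hU₁u : IsUnit U₁) (hU₂ : U₂.IsDiag) (hU₂u : IsUnit U₂)
    (hV₁ : UnipotentUpper V₁) (hV₂ : UnipotentUpper V₂)
    (heq : T₁ * U₁ * π₁.permMatrix R * V₁ = T₂ * U₂ * π₂.permMatrix R * V₂) :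
    π₁ = π₂ ∧ U₁ = U₂ := by
  -- inverses of the unipotent factors
  obtain ⟨T₂', hT₂', hT₂'l, hT₂'r⟩ := unipLower_inv T₂ hT₂
  obtain ⟨V₁', hV₁', hV₁'l, hV₁'r⟩ := unipUpper_inv V₁ hV₁
  -- inverse of U₂
  obtain ⟨u, hu⟩ := hU₂u
  set B : Matrix (Fin n) (Fin n) R := Units.val u⁻¹ with hB
  have hBl : B * U₂ = 1 := by rw [hB, ← hu]; exact u.inv_mul
  have hBr : U₂ * B = 1 := by rw [hB, ← hu]; exact u.mul_inv
  have hBd : B.IsDiag := by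
    intro i j hij
    have h1 : U₂ i i * B i j = 0 := by
      have := congrFun (congrFun hBr i) j
      rw [diag_mul_apply hU₂] at this
      rw [this, Matrix.one_apply_ne hij]
    have h2 : B i i * U₂ i i = 1 := by
      have := congrFun (congrFun hBl i) i
      rw [mul_diag_apply hU₂] at this
      rw [this, Matrix.one_apply_eq]
    calc B i j = (B i i * U₂ i i) * B i j := by rw [h2, one_mul]
      _ = B i i * (U₂ i i * B i j) := by rw [mul_assoc]
      _ = 0 := by rw [h1, mul_zero]
  have hBdiag : ∀ i, B i i * U₂ i i = 1 := by
    intro i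
    have := congrFun (congrFun hBl i) i
    rw [mul_diag_apply hU₂] at this
    rw [this, Matrix.one_apply_eq]
  have hBdiag' : ∀ i, U₂ i i * B i i = 1 := by
    intro i
    have := congrFun (congrFun hBr i) i
    rw [mul_diag_apply hBd] at this
    rw [this, Matrix.one_apply_eq]
  -- the main rearranged equation
  set L : Matrix (Fin n) (Fin n) R := B * (T₂' * (T₁ * U₁)) with hL
  set W : Matrix (Fin n) (Fin n) R := V₂ * V₁' with hW
  have key : L * π₁.permMatrix R = π₂.permMatrix R * W := by
    have h1 := congrArg (fun X => B * (T₂' * (X * V₁'))) heq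
    simp only [mul_assoc] at h1
    rw [hV₁'r, mul_one] at h1
    rw [← mul_assoc T₂' T₂, hT₂'l, one_mul, ← mul_assoc B U₂, hBl, one_mul] at h1
    rw [hL, hW]
    simp only [mul_assoc]
    exact h1
  -- triangularity of L, W
  have hLlow : ∀ i j : Fin n, i < j → L i j = 0 := by
    rw [hL]
    exact lower_mul_lower (fun i j h => hBd (Fin.ne_of_lt h))
      (lower_mul_lower hT₂'.1 (lower_mul_lower hT₁.1 (fun i j h => hU₁ (Fin.ne_of_lt h))))
  have hLdiag : ∀ i, L i i = B i i * U₁ i i := by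
    intro i
    rw [hL, diag_mul_apply hBd,
      lower_mul_diag hT₂'.1 (lower_mul_lower hT₁.1 (fun i j h => hU₁ (Fin.ne_of_lt h))),
      lower_mul_diag hT₁.1 (fun i j h => hU₁ (Fin.ne_of_lt h)), hT₂'.2, hT₁.2, one_mul, one_mul]
  have hWd : ∀ i, W i i = 1 := by
    intro i
    rw [hW, upper_mul_diag hV₂.1 hV₁'.1, hV₂.2, hV₁'.2, one_mul]
  -- entrywise form of the key equation
  have entry : ∀ i j : Fin n, L i (π₁.symm j) = W (π₂ i) j := by
    intro i j
    have h1 : L * π₁.permMatrix R = L.submatrix id π₁.symm :=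
      PEquiv.mul_toMatrix_toPEquiv L π₁
    have h2 : π₂.permMatrix R * W = W.submatrix π₂ id :=
      PEquiv.toMatrix_toPEquiv_mul π₂ W
    have h3 : L.submatrix id π₁.symm = W.submatrix π₂ id := by
      rw [← h1, ← h2, key]
    have := congrFun (congrFun h3 i) j
    simpa using this
  -- π₁ = π₂
  have hperm : π₁ = π₂ := by
    have hle : ∀ i, (π₁⁻¹ * π₂) i ≤ i := by
      intro i
      by_contra hlt
      push_neg at hlt
      have h0 : L i (π₁.symm (π₂ i)) = W (π₂ i) (π₂ i) := entry i (π₂ i)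
      rw [hWd] at h0
      have : π₁.symm (π₂ i) = (π₁⁻¹ * π₂) i := rfl
      rw [this, hLlow i _ hlt] at h0
      exact zero_ne_one h0
    have := perm_eq_one_of_le (π₁⁻¹ * π₂) hle
    have := inv_mul_eq_one.mp this
    exact this
  subst hperm
  refine ⟨rfl, ?_⟩
  -- diagonal entries agree
  have hdiag : ∀ i, U₁ i i = U₂ i i := by
    intro i
    have h0 : L i i = 1 := by
      have := entry i (π₁ i)
      rw [Equiv.symm_apply_apply, hWd] at this
      exact this
    rw [hLdiag] at h0
    calc U₁ i i = (U₂ i i * B i i) * U₁ i i := by rw [hBdiag' i, one_mul]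
      _ = U₂ i i * (B i i * U₁ i i) := by rw [mul_assoc]
      _ = U₂ i i := by rw [h0, mul_one]
  ext i j
  by_cases hij : i = j
  · subst hij; exact hdiag i
  · rw [hU₁ hij, hU₂ hij]
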